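/- arXiv:1208.4383 — 3 statements merged into one kernel-verified Lean document; each statement's English description precedes it below -/
import Mathlib

section
/- Let T be an infinite semigroup that is an annihilator extension of an infinite semigroup S of coclass r-1 (r ≥ 1). Then T is finitely generated, residually nilpotent, and has coclass r. -/
/-- `sgPow S i` is the set `Sⁱ` of all products of `i` elements of `S`
(with the convention `S⁰ = S¹ = S`). -/
def sgPow (S : Type*) [Mul S] : ℕ → Set S
  | 0 => Set.univ
  | 1 => Set.univ
  | n + 2 => Set.image2 (· * ·) (sgPow S (n + 1)) Set.univ

/-- A semigroup with zero is nilpotent of class `c` if `S^(c+1) = {0}` and `S^c ≠ {0}`. -/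
def IsNilpotentOfClass (S : Type*) [SemigroupWithZero S] (c : ℕ) : Prop :=
  sgPow S (c + 1) = {0} ∧ sgPow S c ≠ {0}

/-- `mpow x i` is the power `xⁱ` in a magma, for `i ≥ 1` (with `mpow x 0 = x` by convention). -/
def mpow {S : Type*} [Mul S] (x : S) : ℕ → S
  | 0 => x
  | 1 => x
  | n + 2 => mpow x (n + 1) * x
/-- A semigroup is finitely generated if it is generated by a finite set. -/
def FGSemigroup (S : Type*) [Mul S] : Prop :=
  ∃ F : Finset S, Subsemigroup.closure (F : Set S) = ⊤

/-- A semigroup with zero is residually nilpotent if the intersection of its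
power ideals is `{0}`. -/
def ResiduallyNilpotent (S : Type*) [SemigroupWithZero S] : Prop :=
  ⋂ i, sgPow S (i + 1) = {0}

/-- The coclass of the nilpotent quotient `S/Sⁱ`: its number of non-zero elements,
`|S \ Sⁱ|`, minus its class `i - 1`. -/
noncomputable def ccQuot (S : Type*) [SemigroupWithZero S] (i : ℕ) : ℕ :=
  (Set.univ \ sgPow S i).ncard - (i - 1)

/-- A finitely generated residually nilpotent semigroup has coclass `r` if the coclasses
of its nilpotent quotients `S/Sⁱ` converge to `r`. -/
def HasCoclassSg (S : Type*) [SemigroupWithZero S] (r : ℕ) : Prop :=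
  ∀ᶠ i in Filter.atTop, ccQuot S i = r
section auxlemmas

variable {S : Type*}

lemma sgPow_zero [Mul S] : sgPow S 0 = Set.univ := rfl
lemma sgPow_one [Mul S] : sgPow S 1 = Set.univ := rfl
lemma sgPow_add_two [Mul S] (n : ℕ) :
    sgPow S (n + 2) = Set.image2 (· * ·) (sgPow S (n + 1)) Set.univ := rfl

lemma sgPow_succ_eq [Mul S] (n : ℕ) (hn : 1 ≤ n) :
    sgPow S (n + 1) = Set.image2 (· * ·) (sgPow S n) Set.univ := by
  cases n with
  | zero => exact absurd hn (by omega)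
  | succ m => rfl

lemma mem_sgPow_mul [Mul S] {n : ℕ} {x : S} (hx : x ∈ sgPow S n) (y : S) :
    x * y ∈ sgPow S (n + 1) := by
  cases n with
  | zero => rw [sgPow_one]; trivial
  | succ m => rw [sgPow_add_two]; exact ⟨x, hx, y, trivial, rfl⟩

lemma sgPow_succ_subset [Semigroup S] : ∀ n : ℕ, sgPow S (n + 1) ⊆ sgPow S n
  | 0 => by rw [sgPow_zero]; exact Set.subset_univ _
  | 1 => by rw [sgPow_one]; exact Set.subset_univ _
  | (n + 2) => by
      rw [sgPow_add_two, sgPow_add_two]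
      exact Set.image2_subset (sgPow_succ_subset (n + 1)) Set.Subset.rfl

lemma sgPow_anti [Semigroup S] {m n : ℕ} (h : m ≤ n) : sgPow S n ⊆ sgPow S m := by
  induction n, h using Nat.le_induction with
  | base => exact Set.Subset.rfl
  | succ n hn ih => exact (sgPow_succ_subset n).trans ih

lemma zero_mem_sgPow {Z : Type*} [SemigroupWithZero Z] : ∀ n : ℕ, (0 : Z) ∈ sgPow Z n
  | 0 => by rw [sgPow_zero]; trivial
  | 1 => by rw [sgPow_one]; trivial
  | (n + 2) => by
      rw [sgPow_add_two]
      exact ⟨0, zero_mem_sgPow (n + 1), 0, trivial, mul_zero 0⟩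

def lprod [Mul S] (a : S) (l : List S) : S := l.foldl (· * ·) a

lemma lprod_snoc [Mul S] (a b : S) (l : List S) : lprod a (l ++ [b]) = lprod a l * b := by
  simp [lprod]

lemma lprod_mem_sgPow [Semigroup S] (a : S) (l : List S) :
    lprod a l ∈ sgPow S (l.length + 1) := by
  induction l using List.reverseRecOn with
  | nil => simp only [List.length_nil]; rw [sgPow_one]; trivial
  | append_singleton l b ih =>
      rw [lprod_snoc]
      simpa using mem_sgPow_mul ih b

lemma lprod_mul [Semigroup S] (a b : S) (l m : List S) :
    lprod a l * lprod b m = lprod a (l ++ b :: m) := by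
  induction m using List.reverseRecOn with
  | nil => exact (lprod_snoc a b l).symm
  | append_singleton m c ih =>
      rw [lprod_snoc, ← mul_assoc, ih, ← lprod_snoc]
      congr 1
      simp

lemma exists_lprod [Semigroup S] {F : Set S} {x : S}
    (hx : x ∈ Subsemigroup.closure F) :
    ∃ (a : S) (l : List S), a ∈ F ∧ (∀ y ∈ l, y ∈ F) ∧ lprod a l = x := by
  induction hx using Subsemigroup.closure_induction with
  | mem a ha => exact ⟨a, [], ha, by simp, rfl⟩
  | mul a b ha hb iha ihb =>
      obtain ⟨a1, l1, h1, h2, h3⟩ := iha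
      obtain ⟨b1, l2, h4, h5, h6⟩ := ihb
      refine ⟨a1, l1 ++ b1 :: l2, h1, ?_, ?_⟩
      · intro y hy
        rcases List.mem_append.mp hy with h | h
        · exact h2 y h
        · rcases List.mem_cons.mp h with rfl | h
          · exact h4
          · exact h5 y h
      · rw [← lprod_mul, h3, h6]

end auxlemmas

/-- Let `S` be an infinite finitely generated residually nilpotent semigroup of coclass
`r - 1` (`r ≥ 1`), and let `T` be an annihilator extension of `S`: `T` is an infinite
semigroup with zero containing a non-zero annihilating element `t` such that the Rees
quotient `T/⟨t⟩` is isomorphic to `S` (witnessed by the map `ν`). Then `T` is finitely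
generated, residually nilpotent, and has coclass `r`. -/
theorem statement4 (r : ℕ) (hr : 1 ≤ r)
    {S : Type*} [SemigroupWithZero S] [Infinite S]
    (hfgS : FGSemigroup S) (hrnS : ResiduallyNilpotent S) (hccS : HasCoclassSg S (r - 1))
    {T : Type*} [SemigroupWithZero T] [Infinite T]
    (t : T) (ht : t ≠ 0) (htl : ∀ x : T, t * x = 0) (htr : ∀ x : T, x * t = 0)
    (ν : T → S) (hmul : ∀ x y : T, ν (x * y) = ν x * ν y)
    (hsurj : Function.Surjective ν)
    (hker : ∀ x : T, ν x = 0 ↔ x = 0 ∨ x = t)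
    (hinj : ∀ x y : T, x ≠ 0 → x ≠ t → ν x = ν y → x = y) :
    FGSemigroup T ∧ ResiduallyNilpotent T ∧ HasCoclassSg T r := by
  classical
  obtain ⟨F, hF⟩ := hfgS
  choose σ hσ using hsurj
  have hrnS' : (⋂ i, sgPow S (i + 1)) = {0} := hrnS
  have hνt : ν t = 0 := (hker t).mpr (Or.inr rfl)
  have hν0 : ν (0 : T) = 0 := (hker 0).mpr (Or.inl rfl)
  have hνne : ∀ x : T, x ≠ 0 → x ≠ t → ν x ≠ 0 := by
    intro x h1 h2 h
    rcases (hker x).mp h with h' | h' <;> contradiction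
  have hσne : ∀ s : S, s ≠ 0 → σ s ≠ 0 ∧ σ s ≠ t := by
    intro s hs
    constructor
    · intro h; exact hs (by rw [← hσ s, h, hν0])
    · intro h; exact hs (by rw [← hσ s, h, hνt])
  have hσinj : Function.Injective σ := fun a b h => by rw [← hσ a, h, hσ b]
  -- ν maps powers to powers
  have hνpow : ∀ n, ∀ x, x ∈ sgPow T n → ν x ∈ sgPow S n := by
    intro n
    induction n with
    | zero => intro x _; rw [sgPow_zero]; trivial
    | succ m ih =>
      cases m with
      | zero => intro x _; rw [sgPow_one]; trivial
      | succ k =>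
        intro x hx
        rw [sgPow_add_two] at hx
        obtain ⟨a, ha, b, -, rfl⟩ := hx
        rw [hmul, sgPow_add_two]
        exact ⟨ν a, ih a ha, ν b, trivial, rfl⟩
  -- nonzero elements of S-powers lift into T-powers
  have hliftpow : ∀ n, ∀ s, s ∈ sgPow S n → s ≠ 0 → ∀ x : T, ν x = s → x ∈ sgPow T n := by
    intro n
    induction n with
    | zero => intro s _ _ x _; rw [sgPow_zero]; trivial
    | succ m ih =>
      cases m with
      | zero => intro s _ _ x _; rw [sgPow_one]; trivial
      | succ k =>
        intro s hs hs0 x hx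
        rw [sgPow_add_two] at hs
        obtain ⟨p, hp, q, -, rfl⟩ := hs
        have hp0 : p ≠ 0 := fun h => hs0 (by rw [h]; exact zero_mul q)
        have hq0 : q ≠ 0 := fun h => hs0 (by rw [h]; exact mul_zero p)
        have hP : σ p ∈ sgPow T (k + 1) := ih p hp hp0 (σ p) (hσ p)
        have hx0 : x ≠ 0 := fun h => hs0 (by rw [← hx, h, hν0])
        have hxt : x ≠ t := fun h => hs0 (by rw [← hx, h, hνt])
        have hxe : x = σ p * σ q := hinj x _ hx0 hxt (by rw [hx, hmul, hσ, hσ])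
        rw [hxe, sgPow_add_two]
        exact ⟨σ p, hP, σ q, trivial, rfl⟩
  -- Finite generation of T
  have hFG : FGSemigroup T := by
    refine ⟨insert t (F.image σ), ?_⟩
    rw [Subsemigroup.eq_top_iff']
    intro x
    have htmem : t ∈ Subsemigroup.closure ((insert t (F.image σ) : Finset T) : Set T) :=
      Subsemigroup.subset_closure (by simp)
    have key : ∀ s, s ∈ Subsemigroup.closure (F : Set S) → s ≠ 0 → ∀ y : T, ν y = s →
        y ∈ Subsemigroup.closure ((insert t (F.image σ) : Finset T) : Set T) := by
      intro s hs
      induction hs using Subsemigroup.closure_induction with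
      | mem a ha =>
          intro ha0 y hy
          have hya : y = σ a := hinj y _
            (fun h => ha0 (by rw [← hy, h, hν0]))
            (fun h => ha0 (by rw [← hy, h, hνt]))
            (by rw [hy, hσ])
          rw [hya]
          refine Subsemigroup.subset_closure ?_
          simp only [Finset.coe_insert, Set.mem_insert_iff, Finset.coe_image, Set.mem_image,
            Finset.mem_coe]
          exact Or.inr ⟨a, ha, rfl⟩
      | mul a b ha hb iha ihb =>
          intro hab0 y hy
          have ha0 : a ≠ 0 := fun h => hab0 (by rw [h, zero_mul])
          have hb0 : b ≠ 0 := fun h => hab0 (by rw [h, mul_zero])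
          have h1 := iha ha0 (σ a) (hσ a)
          have h2 := ihb hb0 (σ b) (hσ b)
          have hye : y = σ a * σ b := hinj y _
            (fun h => hab0 (by rw [← hy, h, hν0]))
            (fun h => hab0 (by rw [← hy, h, hνt]))
            (by rw [hy, hmul, hσ, hσ])
          rw [hye]
          exact Subsemigroup.mul_mem _ h1 h2
    by_cases hx0 : x = 0
    · rw [hx0, ← htl t]
      exact Subsemigroup.mul_mem _ htmem htmem
    by_cases hxt : x = t
    · rw [hxt]; exact htmem
    · exact key (ν x) (by rw [hF]; exact Subsemigroup.mem_top _) (hνne x hx0 hxt) x rfl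
  -- finiteness of complements of powers of S
  have hKfin : ∀ i : ℕ, (Set.univ \ sgPow S i).Finite := by
    intro i
    have hLfin : {l : List S | l.length < i ∧ ∀ y ∈ l, y ∈ (F : Set S)}.Finite := by
      have h1 : {l : List {x : S // x ∈ (F : Set S)} | l.length < i}.Finite :=
        List.finite_length_lt _ i
      have h2 := Set.Finite.image (List.map (fun y : {x : S // x ∈ (F : Set S)} => y.val)) h1
      refine h2.subset ?_
      rintro l ⟨hl1, hl2⟩
      refine ⟨l.pmap (fun y hy => (⟨y, hy⟩ : {x : S // x ∈ (F : Set S)})) hl2,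
        by simpa using hl1, ?_⟩
      rw [List.map_pmap]
      simp [List.pmap_eq_map]
    have hPfin : ((F : Set S) ×ˢ {l : List S | l.length < i ∧ ∀ y ∈ l, y ∈ (F : Set S)}).Finite :=
      F.finite_toSet.prod hLfin
    refine ((hPfin.image (fun p : S × List S => lprod p.1 p.2))).subset ?_
    rintro x ⟨-, hx2⟩
    have hxcl : x ∈ Subsemigroup.closure (F : Set S) := by
      rw [hF]; exact Subsemigroup.mem_top _
    obtain ⟨a, l, haF, hlF, hal⟩ := exists_lprod hxcl
    have hlen : l.length + 1 < i := by
      by_contra h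
      exact hx2 (sgPow_anti (by omega) (hal ▸ lprod_mem_sgPow a l))
    exact ⟨(a, l), ⟨haF, by show l.length < i; omega, hlF⟩, hal⟩
  -- strictness of the chain of powers of S
  have hpow_ne : ∀ i : ℕ, 1 ≤ i → sgPow S (i + 1) ≠ sgPow S i := by
    intro i hi h
    have hstab : ∀ j, i ≤ j → sgPow S j = sgPow S i := by
      intro j hj
      induction j, hj using Nat.le_induction with
      | base => rfl
      | succ j hj ihj =>
          rw [sgPow_succ_eq j (by omega), ihj, ← sgPow_succ_eq i hi, h]
    have hsmall : sgPow S i ⊆ {0} := by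
      intro x hx
      rw [← hrnS']
      refine Set.mem_iInter.mpr fun k => ?_
      rcases le_or_gt i (k + 1) with hk | hk
      · rw [hstab (k + 1) hk]; exact hx
      · exact sgPow_anti (by omega) hx
    have hfin : (Set.univ : Set S).Finite := by
      refine ((hKfin i).union (Set.finite_singleton (0 : S))).subset ?_
      intro x _
      by_cases hxi : x ∈ sgPow S i
      · exact Or.inr (hsmall hxi)
      · exact Or.inl ⟨trivial, hxi⟩
    exact Set.infinite_univ hfin
  have hKmono : ∀ i : ℕ, (Set.univ \ sgPow S i) ⊆ (Set.univ \ sgPow S (i + 1)) :=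
    fun i x hx => ⟨trivial, fun h => hx.2 (sgPow_succ_subset i h)⟩
  have hfgrow : ∀ i : ℕ, 1 ≤ i →
      (Set.univ \ sgPow S i).ncard + 1 ≤ (Set.univ \ sgPow S (i + 1)).ncard := by
    intro i hi
    have hss : (Set.univ \ sgPow S i) ⊂ (Set.univ \ sgPow S (i + 1)) := by
      refine ⟨hKmono i, fun hsub => ?_⟩
      apply hpow_ne i hi
      apply Set.eq_of_subset_of_subset (sgPow_succ_subset i)
      intro x hx
      by_contra hx'
      exact (hsub ⟨trivial, hx'⟩).2 hx
    have := Set.ncard_lt_ncard hss (hKfin (i + 1))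
    omega
  have hflb : ∀ i : ℕ, 1 ≤ i → i - 1 ≤ (Set.univ \ sgPow S i).ncard := by
    intro i hi
    induction i, hi using Nat.le_induction with
    | base => omega
    | succ i hi ihi => have := hfgrow i hi; omega
  obtain ⟨M, hM⟩ := Filter.eventually_atTop.mp hccS
  set N := max M 2 with hNdef
  have hN2 : 2 ≤ N := le_max_right M 2
  have hNM : M ≤ N := le_max_left M 2
  have hfeq : ∀ i : ℕ, N ≤ i → (Set.univ \ sgPow S i).ncard = (i - 1) + (r - 1) := by
    intro i hi
    have h1 := hM i (by omega)
    have h2 := hflb i (by omega)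
    simp only [ccQuot] at h1
    omega
  -- the singleton differences d i for i ≥ N
  have hdiff : ∀ i : ℕ, ∃ a : S, N ≤ i → sgPow S i \ sgPow S (i + 1) = {a} := by
    intro i
    by_cases hi : N ≤ i
    · have e1 := hfeq i hi
      have e2 := hfeq (i + 1) (by omega)
      have e3 : ((Set.univ \ sgPow S (i + 1)) \ (Set.univ \ sgPow S i)).ncard = 1 := by
        rw [Set.ncard_diff (hKmono i) (hKfin i), e1, e2]
        omega
      have heq : sgPow S i \ sgPow S (i + 1) =
          (Set.univ \ sgPow S (i + 1)) \ (Set.univ \ sgPow S i) := by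
        ext x
        simp only [Set.mem_diff, Set.mem_univ, true_and, not_and, not_not]
        tauto
      rw [heq] at *
      obtain ⟨a, ha⟩ := Set.ncard_eq_one.mp e3
      exact ⟨a, fun _ => by rw [heq, ha]⟩
    · exact ⟨0, fun h => absurd h hi⟩
  choose d hd using hdiff
  have hdmem : ∀ i, N ≤ i → d i ∈ sgPow S i ∧ d i ∉ sgPow S (i + 1) := by
    intro i hi
    have h := hd i hi
    have h2 : d i ∈ sgPow S i \ sgPow S (i + 1) := by rw [h]; exact rfl
    exact ⟨h2.1, h2.2⟩
  have hdne : ∀ i, N ≤ i → d i ≠ 0 := fun i hi h =>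
    (hdmem i hi).2 (h ▸ zero_mem_sgPow (i + 1))
  have hchain : ∀ j, N ≤ j → ∀ x, x ∈ sgPow S j → x ≠ 0 → ∃ k, j ≤ k ∧ x = d k := by
    intro j hj x hx hx0
    have hex : ∃ n, x ∉ sgPow S n := by
      have hni : x ∉ (⋂ i, sgPow S (i + 1)) := by
        rw [hrnS']
        exact fun hmem => hx0 hmem
      simp only [Set.mem_iInter, not_forall] at hni
      obtain ⟨n, hn⟩ := hni
      exact ⟨n + 1, hn⟩
    set n := Nat.find hex with hn
    have hn2 := Nat.find_spec hex
    have hnpos : j + 1 ≤ n := by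
      by_contra h
      exact hn2 (sgPow_anti (by omega) hx)
    have hk1 : x ∈ sgPow S (n - 1) := by
      by_contra h
      exact Nat.find_min hex (show n - 1 < n by omega) h
    refine ⟨n - 1, by omega, ?_⟩
    have hset := hd (n - 1) (by omega)
    have hmem : x ∈ sgPow S (n - 1) \ sgPow S (n - 1 + 1) :=
      ⟨hk1, by rw [show n - 1 + 1 = n by omega]; exact hn2⟩
    rw [hset] at hmem
    exact hmem
  -- the lifted chain in T
  set D : ℕ → T := fun i => σ (d i) with hDdef
  have hνD : ∀ i, ν (D i) = d i := fun i => hσ (d i)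
  have hDne : ∀ i, N ≤ i → D i ≠ 0 ∧ D i ≠ t := fun i hi => hσne (d i) (hdne i hi)
  have hDpow : ∀ i, N ≤ i → D i ∈ sgPow T i := fun i hi =>
    hliftpow i (d i) (hdmem i hi).1 (hdne i hi) (D i) (hνD i)
  have hDnotpow : ∀ i, N ≤ i → D i ∉ sgPow T (i + 1) := fun i hi h =>
    (hdmem i hi).2 (hνD i ▸ hνpow (i + 1) (D i) h)
  have hTb : ∀ j, N ≤ j → ∀ x, x ∈ sgPow T j → x ≠ 0 → x ≠ t → ∃ k, j ≤ k ∧ x = D k := by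
    intro j hj x hx hx0 hxt
    obtain ⟨k, hk, hdk⟩ := hchain j hj (ν x) (hνpow j x hx) (hνne x hx0 hxt)
    exact ⟨k, hk, hinj x (D k) hx0 hxt (by rw [hdk, hνD])⟩
  have hTa : ∀ j, ∃ V : T, N ≤ j → D (j + 1) = D j * V := by
    intro j
    by_cases hj : N ≤ j
    · have h1 : D (j + 1) ∈ sgPow T (j + 1) := hDpow (j + 1) (by omega)
      rw [sgPow_succ_eq j (by omega)] at h1
      obtain ⟨x, hx, y, -, hxy⟩ := h1
      have hx0 : x ≠ 0 := fun h =>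
        (hDne (j + 1) (by omega)).1 (by rw [← hxy, h]; exact zero_mul y)
      have hxt : x ≠ t := fun h =>
        (hDne (j + 1) (by omega)).1 (by rw [← hxy, h]; exact htl y)
      obtain ⟨k, hk, rfl⟩ := hTb j hj x hx hx0 hxt
      rcases eq_or_lt_of_le hk with rfl | hk'
      · exact ⟨y, fun _ => hxy.symm⟩
      · exfalso
        apply hDnotpow (j + 1) (by omega)
        rw [← hxy]
        exact sgPow_anti (show j + 2 ≤ k + 1 by omega) (mem_sgPow_mul (hDpow k (by omega)) y)
    · exact ⟨0, fun h => absurd h hj⟩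
  choose V hV using hTa
  have hTz : ∀ a, N ≤ a → ∀ b, a + 1 ≤ b → ∃ Z, Z ∈ sgPow T (b - a) ∧ D b = D a * Z := by
    intro a ha b hb
    induction b, hb using Nat.le_induction with
    | base =>
        refine ⟨V a, ?_, hV a ha⟩
        rw [show a + 1 - a = 1 by omega, sgPow_one]
        trivial
    | succ b hb ih =>
        obtain ⟨Z, hZ, hDb⟩ := ih
        refine ⟨Z * V b, ?_, ?_⟩
        · rw [show b + 1 - a = (b - a) + 1 by omega]
          exact mem_sgPow_mul hZ (V b)
        · rw [hV b (by omega), hDb, mul_assoc]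
  -- t is eventually not in the powers of T
  have hmain : ∃ i0, t ∉ sgPow T i0 := by
    by_contra hcon
    push_neg at hcon
    have hQ : ∀ B : ℕ, ∃ q, B ≤ q ∧ t = D N * D q := by
      intro B
      have hk := hcon (B + 2 * N + 1)
      rw [sgPow_succ_eq (B + 2 * N) (by omega)] at hk
      obtain ⟨x, hx, z, -, hxz⟩ := hk
      have hx0 : x ≠ 0 := fun hh => ht (by rw [← hxz, hh]; exact zero_mul z)
      have hxt : x ≠ t := fun hh => ht (by rw [← hxz, hh]; exact htl z)
      obtain ⟨m, hm, rfl⟩ := hTb (B + 2 * N) (by omega) x hx hx0 hxt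
      obtain ⟨Z, hZ, hDm⟩ := hTz N le_rfl m (by omega)
      have hassoc : t = D N * (Z * z) := by rw [← hxz, hDm]; exact mul_assoc _ _ _
      have hu0 : Z * z ≠ 0 := fun hh => ht (by rw [hassoc, hh]; exact mul_zero _)
      have hut : Z * z ≠ t := fun hh => ht (by rw [hassoc, hh]; exact htr _)
      have huP : Z * z ∈ sgPow T (m - N + 1) := mem_sgPow_mul hZ z
      obtain ⟨q, hq, hqeq⟩ := hTb (m - N + 1) (by omega) (Z * z) huP hu0 hut
      exact ⟨q, by omega, by rw [hassoc, hqeq]⟩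
    obtain ⟨q1, hq1, he1⟩ := hQ (N + 1)
    obtain ⟨q2, hq2, he2⟩ := hQ (q1 + 1)
    obtain ⟨Z, hZ, hDq⟩ := hTz q1 (by omega) q2 (by omega)
    apply ht
    rw [he2, hDq, ← mul_assoc, ← he1]
    exact htl Z
  obtain ⟨i0, hi0⟩ := hmain
  have htne : ∀ i, i0 ≤ i → t ∉ sgPow T i := fun i hi hh => hi0 (sgPow_anti hi hh)
  -- residual nilpotency of T
  have hRN : ResiduallyNilpotent T := by
    show (⋂ i, sgPow T (i + 1)) = {0}
    apply Set.eq_of_subset_of_subset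
    · intro x hx
      have hx' : ∀ i, x ∈ sgPow T (i + 1) := Set.mem_iInter.mp hx
      have hxn : ν x ∈ (⋂ i, sgPow S (i + 1)) :=
        Set.mem_iInter.mpr fun i => hνpow (i + 1) x (hx' i)
      rw [hrnS'] at hxn
      rcases (hker x).mp hxn with h0 | ht'
      · exact h0 ▸ rfl
      · exact absurd (ht' ▸ hx' i0) (fun hh => hi0 (sgPow_succ_subset i0 hh))
    · intro x hx
      rw [Set.mem_singleton_iff.mp hx]
      exact Set.mem_iInter.mpr fun i => zero_mem_sgPow (i + 1)
  -- coclass of T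
  have hcc : HasCoclassSg T r := by
    show ∀ᶠ i in Filter.atTop, ccQuot T i = r
    refine Filter.eventually_atTop.mpr ⟨N + i0, fun i hi => ?_⟩
    have hiN : N ≤ i := by omega
    have hii0 : i0 ≤ i := by omega
    have hset : Set.univ \ sgPow T i = insert t (σ '' (Set.univ \ sgPow S i)) := by
      apply Set.eq_of_subset_of_subset
      · rintro x ⟨-, hx⟩
        by_cases hx0 : x = 0
        · exact absurd (hx0 ▸ zero_mem_sgPow i) hx
        by_cases hxt : x = t
        · exact hxt ▸ Set.mem_insert _ _
        · refine Set.mem_insert_iff.mpr (Or.inr ?_)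
          have hνx0 : ν x ≠ 0 := hνne x hx0 hxt
          have hνxn : ν x ∉ sgPow S i := fun hh => hx (hliftpow i (ν x) hh hνx0 x rfl)
          have hxσ : x = σ (ν x) := hinj x _ hx0 hxt (hσ _).symm
          exact ⟨ν x, ⟨trivial, hνxn⟩, hxσ.symm⟩
      · intro x hx
        rcases Set.mem_insert_iff.mp hx with rfl | ⟨s, ⟨-, hs⟩, rfl⟩
        · exact ⟨trivial, htne i hii0⟩
        · refine ⟨trivial, fun hh => hs ?_⟩
          have h2 := hνpow i (σ s) hh
          rw [hσ] at h2
          exact h2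
    have htnotimg : t ∉ σ '' (Set.univ \ sgPow S i) := by
      rintro ⟨s, ⟨-, hs⟩, hst⟩
      have hs0 : s ≠ 0 := fun hh => hs (hh ▸ zero_mem_sgPow i)
      exact hs0 (by rw [← hσ s, hst, hνt])
    have himgfin : (σ '' (Set.univ \ sgPow S i)).Finite := (hKfin i).image σ
    have hcard : (Set.univ \ sgPow T i).ncard = (Set.univ \ sgPow S i).ncard + 1 := by
      rw [hset, Set.ncard_insert_of_notMem htnotimg himgfin,
        Set.ncard_image_of_injective _ hσinj]
    have hfi := hfeq i hiN
    show (Set.univ \ sgPow T i).ncard - (i - 1) = r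
    rw [hcard, hfi]
    omega
  exact ⟨hFG, hRN, hcc⟩
end

section
/- Let n ≥ 6 be even and K a field containing a square root of -1. Let X = ⟨u, v | u^{n-1} = u^n, uv = u^{n/2}, vu = u^{n/2}, v^2 = u^{n-1}⟩ and J_{n-1} = ⟨u, v | u^{n-1} = u^n, uv = u^{n-1}, vu = u^{n-1}, v^2 = u^{n-2}⟩, nilpotent semigroups of order n with zero u^{n-1}. Then the contracted semigroup algebras KX and K J_{n-1} are isomorphic, via u ↦ u, v ↦ u^{n/2 - 1} - i·v where i^2 = -1. -/
section AlgebraDefs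

variable (K : Type*) [Field K] (A : Type*) [NonUnitalRing A] [Module K A]
  [SMulCommClass K A A] [IsScalarTower K A A]

/-- `algPow K A i` is the submodule `Aⁱ` spanned by all products of `i` elements
(with `A⁰ = A¹ = A`). -/
def algPow : ℕ → Submodule K A
  | 0 => ⊤
  | 1 => ⊤
  | n + 2 => Submodule.span K (Set.image2 (· * ·) ((algPow (n + 1) : Submodule K A) : Set A) Set.univ)

/-- The dimension of the layer `Aⁱ/Aⁱ⁺¹`. -/
noncomputable def algLayerDim (i : ℕ) : ℕ :=
  Module.finrank K
    (↥(algPow K A i) ⧸ (algPow K A (i + 1)).comap (algPow K A i).subtype)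

/-- The coclass of the nilpotent quotient `A/Aⁱ`, namely `dim (A/Aⁱ) - (i - 1)`. -/
noncomputable def algCcQuot (i : ℕ) : ℕ :=
  Module.finrank K (A ⧸ algPow K A i) - (i - 1)

/-- A finitely generated residually nilpotent algebra has coclass `r` if the coclasses
of its nilpotent quotients `A/Aⁱ` converge to `r`. -/
def HasCoclassAlg (r : ℕ) : Prop :=
  ∀ᶠ i in Filter.atTop, algCcQuot K A i = r

/-- The two-sided annihilator of an algebra, as a submodule. -/
def twoSidedAnn : Submodule K A where
  carrier := {a | (∀ b, a * b = 0) ∧ ∀ b, b * a = 0}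
  add_mem' := by
    intro a b ha hb
    exact ⟨fun c => by rw [add_mul, ha.1 c, hb.1 c, add_zero],
           fun c => by rw [mul_add, ha.2 c, hb.2 c, add_zero]⟩
  zero_mem' := ⟨fun b => zero_mul b, fun b => mul_zero b⟩
  smul_mem' := by
    intro k a ha
    exact ⟨fun b => by rw [smul_mul_assoc, ha.1 b, smul_zero],
           fun b => by rw [mul_smul_comm, ha.2 b, smul_zero]⟩

/-- The right annihilator of an algebra, as a submodule. -/
def rightAnn : Submodule K A where
  carrier := {a | ∀ b, b * a = 0}
  add_mem' := by
    intro a b ha hb c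
    rw [mul_add, ha c, hb c, add_zero]
  zero_mem' := fun b => mul_zero b
  smul_mem' := by
    intro k a ha b
    rw [mul_smul_comm, ha b, smul_zero]

end AlgebraDefs

/-- `IsContractedAlgebra K f` asserts that `f : S → A` exhibits the algebra `A` as the
contracted semigroup algebra of the semigroup-with-zero `S` over the field `K`:
`f` is multiplicative, sends zero to zero, and the images of the non-zero elements
of `S` form a `K`-basis of `A`. -/
def IsContractedAlgebra (K : Type*) [Field K] {S A : Type*} [SemigroupWithZero S]
    [NonUnitalRing A] [Module K A] (f : S → A) : Prop :=
  f 0 = 0 ∧ (∀ s t : S, f (s * t) = f s * f t) ∧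
  LinearIndependent K (fun s : {s : S // s ≠ 0} => f s.1) ∧
  Submodule.span K (Set.range fun s : {s : S // s ≠ 0} => f s.1) = ⊤
/-- `IsCC1Sg n a b c S u v` asserts that `S` is the nilpotent semigroup of order `n`
with zero given by the presentation
`⟨u, v ∣ u^(n-1) = u^n, u*v = u^a, v*u = u^b, v*v = u^c⟩`:
its distinct elements are `u, u², …, u^(n-2), v` and the zero `u^(n-1)`. -/
def IsCC1Sg (n a b c : ℕ) (S : Type*) [SemigroupWithZero S] (u v : S) : Prop :=
  mpow u (n - 1) = 0 ∧ u * v = mpow u a ∧ v * u = mpow u b ∧ v * v = mpow u c ∧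
  v ≠ 0 ∧ (∀ i, 1 ≤ i → i ≤ n - 2 → mpow u i ≠ 0) ∧
  (∀ i j, 1 ≤ i → i ≤ n - 2 → 1 ≤ j → j ≤ n - 2 → mpow u i = mpow u j → i = j) ∧
  (∀ i, 1 ≤ i → i ≤ n - 2 → v ≠ mpow u i) ∧
  (∀ s : S, s = 0 ∨ s = v ∨ ∃ i, 1 ≤ i ∧ i ≤ n - 2 ∧ s = mpow u i)
lemma st10_mpow_one {S : Type*} [Mul S] (x : S) : mpow x 1 = x := rfl

lemma st10_mpow_succ {S : Type*} [Mul S] (x : S) {k : ℕ} (hk : 1 ≤ k) :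
    mpow x (k + 1) = mpow x k * x := by
  match k, hk with
  | k + 1, _ => rfl

lemma st10_mpow_mul_mpow {S : Type*} [Semigroup S] (x : S) :
    ∀ {a b : ℕ}, 1 ≤ a → 1 ≤ b → mpow x a * mpow x b = mpow x (a + b) := by
  intro a b ha hb
  induction b with
  | zero => omega
  | succ b ih =>
    rcases Nat.lt_or_ge 0 b with h | h
    · rw [st10_mpow_succ x h, ← mul_assoc, ih h, ← st10_mpow_succ x (by omega)]
      congr 1
    · have hb0 : b = 0 := by omega
      subst hb0
      rw [st10_mpow_one, ← st10_mpow_succ x ha]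

lemma st10_mpow_zero {S : Type*} [SemigroupWithZero S] {x : S} {c : ℕ} (hc : 1 ≤ c)
    (hz : mpow x c = 0) {k : ℕ} (hk : c ≤ k) : mpow x k = 0 := by
  rcases Nat.eq_or_lt_of_le hk with rfl | h
  · exact hz
  · have h2 : mpow x c * mpow x (k - c) = mpow x k := by
      rw [st10_mpow_mul_mpow x hc (by omega)]
      congr 1
      omega
    rw [← h2, hz, zero_mul]

lemma st10_mpow_mul_v {S : Type*} [Semigroup S] {u v : S} {c : ℕ} (hc : 1 ≤ c)
    (h : u * v = mpow u c) : ∀ a, 1 ≤ a → mpow u a * v = mpow u (a + c - 1) := by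
  intro a ha
  match a, ha with
  | 1, _ =>
    have h1 : 1 + c - 1 = c := by omega
    rw [st10_mpow_one, h, h1]
  | a + 2, _ =>
    rw [st10_mpow_succ u (by omega), mul_assoc, h, st10_mpow_mul_mpow u (by omega) hc]
    congr 1
    omega

lemma st10_v_mul_mpow {S : Type*} [Semigroup S] {u v : S} {c : ℕ} (hc : 1 ≤ c)
    (h : v * u = mpow u c) : ∀ a, 1 ≤ a → v * mpow u a = mpow u (c + a - 1) := by
  intro a ha
  induction a with
  | zero => omega
  | succ a ih =>
    rcases Nat.lt_or_ge 0 a with h' | h'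
    · rw [st10_mpow_succ u h', ← mul_assoc, ih h', ← st10_mpow_succ u (by omega)]
      congr 1
      omega
    · have ha0 : a = 0 := by omega
      subst ha0
      have h1 : c + 1 - 1 = c := by omega
      rw [st10_mpow_one, h, h1]

open Classical in
noncomputable def st10_idx {S : Type*} [Mul S] (u : S) (n : ℕ) (s : S) : ℕ :=
  if h : ∃ k, 1 ≤ k ∧ k ≤ n - 2 ∧ s = mpow u k then h.choose else 0

lemma st10_idx_spec {S : Type*} [Mul S] {u : S} {n : ℕ} {s : S}
    (h : ∃ k, 1 ≤ k ∧ k ≤ n - 2 ∧ s = mpow u k) :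
    1 ≤ st10_idx u n s ∧ st10_idx u n s ≤ n - 2 ∧ s = mpow u (st10_idx u n s) := by
  unfold st10_idx
  rw [dif_pos h]
  exact h.choose_spec

lemma st10_idx_mpow {S : Type*} [Mul S] (u : S) (n : ℕ)
    (huniq : ∀ i j, 1 ≤ i → i ≤ n - 2 → 1 ≤ j → j ≤ n - 2 → mpow u i = mpow u j → i = j)
    {k : ℕ} (h1 : 1 ≤ k) (h2 : k ≤ n - 2) : st10_idx u n (mpow u k) = k := by
  have hex : ∃ j, 1 ≤ j ∧ j ≤ n - 2 ∧ mpow u k = mpow u j := ⟨k, h1, h2, rfl⟩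
  obtain ⟨j1, j2, j3⟩ := st10_idx_spec hex
  exact huniq _ _ j1 j2 h1 h2 j3.symm

/-- Let `n ≥ 6` be even and `K` a field containing a square root `i` of `-1`. Then the
contracted semigroup algebras of
`X = ⟨u, v ∣ u^(n-1) = uⁿ, u*v = u^(n/2), v*u = u^(n/2), v² = u^(n-1)⟩` and
`J_(n-1) = ⟨u, v ∣ u^(n-1) = uⁿ, u*v = u^(n-1), v*u = u^(n-1), v² = u^(n-2)⟩`
are isomorphic, via `u ↦ u`, `v ↦ u^(n/2 - 1) - i • v`. -/
theorem statement10 {K : Type*} [Field K] (n : ℕ) (hn : 6 ≤ n) (hev : Even n)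
    (i : K) (hi : i * i = -1)
    {SX : Type*} [SemigroupWithZero SX] (uX vX : SX)
    (hX : IsCC1Sg n (n / 2) (n / 2) (n - 1) SX uX vX)
    {SJ : Type*} [SemigroupWithZero SJ] (uJ vJ : SJ)
    (hJ : IsCC1Sg n (n - 1) (n - 1) (n - 2) SJ uJ vJ)
    {A : Type*} [NonUnitalRing A] [Module K A] [SMulCommClass K A A] [IsScalarTower K A A]
    {B : Type*} [NonUnitalRing B] [Module K B] [SMulCommClass K B B] [IsScalarTower K B B]
    (f : SX → A) (hf : IsContractedAlgebra K f)
    (g : SJ → B) (hg : IsContractedAlgebra K g) :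
    ∃ e : A →ₙₐ[K] B, Function.Bijective e ∧
      e (f uX) = g uJ ∧ e (f vX) = g (mpow uJ (n / 2 - 1)) - i • g vJ := by

  classical
  obtain ⟨h1X, h2X, h3X, h4X, h5X, h6X, h7X, h8X, h9X⟩ := hX
  obtain ⟨h1J, h2J, h3J, h4J, h5J, h6J, h7J, h8J, h9J⟩ := hJ
  obtain ⟨r, hr⟩ := hev
  -- product rules in SX
  have hXuv : ∀ a, 1 ≤ a → mpow uX a * vX = mpow uX (a + n / 2 - 1) :=
    st10_mpow_mul_v (by omega) h2X
  have hXvu : ∀ a, 1 ≤ a → vX * mpow uX a = mpow uX (n / 2 + a - 1) :=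
    st10_v_mul_mpow (by omega) h3X
  -- product rules in SJ
  have hJuv0 : ∀ a, 1 ≤ a → mpow uJ a * vJ = 0 := by
    intro a ha
    rw [st10_mpow_mul_v (by omega) h2J a ha]
    exact st10_mpow_zero (c := n - 1) (by omega) h1J (by omega)
  have hJvu0 : ∀ a, 1 ≤ a → vJ * mpow uJ a = 0 := by
    intro a ha
    rw [st10_v_mul_mpow (by omega) h3J a ha]
    exact st10_mpow_zero (c := n - 1) (by omega) h1J (by omega)
  -- bases
  let bA : Module.Basis {s : SX // s ≠ 0} K A := Module.Basis.mk hf.2.2.1 hf.2.2.2.ge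
  let bB : Module.Basis {s : SJ // s ≠ 0} K B := Module.Basis.mk hg.2.2.1 hg.2.2.2.ge
  -- the linear map
  obtain ⟨e, heV, heU⟩ : ∃ e : A →ₗ[K] B,
      e (f vX) = g (mpow uJ (n / 2 - 1)) - i • g vJ ∧
      ∀ k, 1 ≤ k → k ≤ n - 2 → e (f (mpow uX k)) = g (mpow uJ k) := by
    refine ⟨bA.constr ℕ (fun s => if s.1 = vX then g (mpow uJ (n / 2 - 1)) - i • g vJ
      else g (mpow uJ (st10_idx uX n s.1))), ?_, ?_⟩
    · have hb : bA ⟨vX, h5X⟩ = f vX := Module.Basis.mk_apply hf.2.2.1 hf.2.2.2.ge ⟨vX, h5X⟩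
      rw [← hb, Module.Basis.constr_basis]
      exact if_pos rfl
    · intro k hk1 hk2
      have hb : bA ⟨mpow uX k, h6X k hk1 hk2⟩ = f (mpow uX k) :=
        Module.Basis.mk_apply hf.2.2.1 hf.2.2.2.ge ⟨mpow uX k, h6X k hk1 hk2⟩
      rw [← hb, Module.Basis.constr_basis]
      show (if mpow uX k = vX then g (mpow uJ (n / 2 - 1)) - i • g vJ
        else g (mpow uJ (st10_idx uX n (mpow uX k)))) = g (mpow uJ k)
      rw [if_neg (fun hc => h8X k hk1 hk2 hc.symm), st10_idx_mpow uX n h7X hk1 hk2]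
  have heU' : ∀ k, 1 ≤ k → e (f (mpow uX k)) = g (mpow uJ k) := by
    intro k hk
    by_cases h : k ≤ n - 2
    · exact heU k hk h
    · rw [st10_mpow_zero (c := n - 1) (by omega) h1X (by omega), hf.1, map_zero,
        st10_mpow_zero (c := n - 1) (by omega) h1J (by omega), hg.1]
  -- multiplicativity on semigroup elements
  have hkey : ∀ s t : SX, e (f (s * t)) = e (f s) * e (f t) := by
    intro s t
    rcases h9X s with rfl | rfl | ⟨a, ha1, ha2, rfl⟩
    · rw [zero_mul, hf.1, map_zero, zero_mul]
    · rcases h9X t with rfl | rfl | ⟨b, hb1, hb2, rfl⟩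
      · rw [mul_zero, hf.1, map_zero, mul_zero]
      · -- v * v
        rw [h4X, h1X, hf.1, map_zero, heV]
        have hPP : g (mpow uJ (n / 2 - 1)) * g (mpow uJ (n / 2 - 1)) = g (mpow uJ (n - 2)) := by
          rw [← hg.2.1, st10_mpow_mul_mpow uJ (by omega) (by omega)]
          have h2 : n / 2 - 1 + (n / 2 - 1) = n - 2 := by omega
          rw [h2]
        have hPQ : g (mpow uJ (n / 2 - 1)) * g vJ = 0 := by
          rw [← hg.2.1, hJuv0 _ (by omega), hg.1]
        have hQP : g vJ * g (mpow uJ (n / 2 - 1)) = 0 := by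
          rw [← hg.2.1, hJvu0 _ (by omega), hg.1]
        have hQQ : g vJ * g vJ = g (mpow uJ (n - 2)) := by
          rw [← hg.2.1, h4J]
        simp only [sub_mul, mul_sub, smul_mul_assoc, mul_smul_comm, hPP, hPQ, hQP, hQQ,
          smul_zero, smul_neg, smul_smul, hi, neg_smul, one_smul, sub_zero, zero_sub,
          neg_neg, sub_self]
      · -- v * u^b
        rw [hXvu b hb1, heU' _ (by omega), heV, heU b hb1 hb2, sub_mul, smul_mul_assoc,
          ← hg.2.1, ← hg.2.1, st10_mpow_mul_mpow uJ (by omega) hb1, hJvu0 b hb1, hg.1,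
          smul_zero, sub_zero]
        have h2 : n / 2 + b - 1 = n / 2 - 1 + b := by omega
        rw [h2]
    · rcases h9X t with rfl | rfl | ⟨b, hb1, hb2, rfl⟩
      · rw [mul_zero, hf.1, map_zero, mul_zero]
      · -- u^a * v
        rw [hXuv a ha1, heU' _ (by omega), heU a ha1 ha2, heV, mul_sub, mul_smul_comm,
          ← hg.2.1, ← hg.2.1, st10_mpow_mul_mpow uJ ha1 (by omega), hJuv0 a ha1, hg.1,
          smul_zero, sub_zero]
        have h2 : a + n / 2 - 1 = a + (n / 2 - 1) := by omega
        rw [h2]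
      · -- u^a * u^b
        rw [st10_mpow_mul_mpow uX ha1 hb1, heU' (a + b) (by omega), heU a ha1 ha2,
          heU b hb1 hb2, ← hg.2.1, st10_mpow_mul_mpow uJ ha1 hb1]
  -- multiplicativity in general
  have hbil : (LinearMap.mul K A).compr₂ e = (LinearMap.mul K B).compl₁₂ e e := by
    apply bA.ext
    intro s
    apply bA.ext
    intro t
    simp only [LinearMap.compr₂_apply, LinearMap.compl₁₂_apply, LinearMap.mul_apply']
    have hs : bA s = f s.1 := Module.Basis.mk_apply hf.2.2.1 hf.2.2.2.ge s
    have ht : bA t = f t.1 := Module.Basis.mk_apply hf.2.2.1 hf.2.2.2.ge t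
    rw [hs, ht, ← hf.2.1]
    exact hkey s.1 t.1
  have hmul : ∀ x y : A, e (x * y) = e x * e y := by
    intro x y
    simpa only [LinearMap.compr₂_apply, LinearMap.compl₁₂_apply, LinearMap.mul_apply']
      using LinearMap.congr_fun (LinearMap.congr_fun hbil x) y
  -- surjectivity
  have hneg : -i * i = 1 := by rw [neg_mul, hi, neg_neg]
  have hsurj : Function.Surjective e := by
    have hrange : Set.range (fun t : {t : SJ // t ≠ 0} => g t.1) ⊆ ↑(LinearMap.range e) := by
      rintro x ⟨t, rfl⟩
      show g t.1 ∈ LinearMap.range e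
      rcases h9J t.1 with h0 | hv | ⟨b, hb1, hb2, hbe⟩
      · exact absurd h0 t.2
      · refine ⟨(-i) • (f (mpow uX (n / 2 - 1)) - f vX), ?_⟩
        rw [map_smul, map_sub, heU (n / 2 - 1) (by omega) (by omega), heV,
          sub_sub_cancel, smul_smul, hneg, one_smul, hv]
      · exact ⟨f (mpow uX b), by rw [heU b hb1 hb2, hbe]⟩
    rw [← LinearMap.range_eq_top]
    have hle := Submodule.span_le.mpr hrange
    rw [hg.2.2.2] at hle
    exact top_le_iff.mp hle
  -- finiteness
  have hfinX : Finite SX := by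
    refine Finite.of_surjective (fun k : Fin n =>
      if (k : ℕ) = 0 then vX else
        if 1 ≤ (k : ℕ) ∧ (k : ℕ) ≤ n - 2 then mpow uX (k : ℕ) else 0) ?_
    intro s
    rcases h9X s with rfl | hv | ⟨a, ha1, ha2, rfl⟩
    · refine ⟨⟨n - 1, by omega⟩, ?_⟩
      show (if n - 1 = 0 then vX else if 1 ≤ n - 1 ∧ n - 1 ≤ n - 2 then mpow uX (n - 1) else 0) = 0
      rw [if_neg (by omega), if_neg (by omega)]
    · refine ⟨⟨0, by omega⟩, ?_⟩
      show (if 0 = 0 then vX else if 1 ≤ 0 ∧ 0 ≤ n - 2 then mpow uX 0 else 0) = s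
      rw [if_pos rfl]
      exact hv.symm
    · refine ⟨⟨a, by omega⟩, ?_⟩
      show (if a = 0 then vX else if 1 ≤ a ∧ a ≤ n - 2 then mpow uX a else 0) = mpow uX a
      rw [if_neg (by omega), if_pos ⟨ha1, ha2⟩]
  have hfinJ : Finite SJ := by
    refine Finite.of_surjective (fun k : Fin n =>
      if (k : ℕ) = 0 then vJ else
        if 1 ≤ (k : ℕ) ∧ (k : ℕ) ≤ n - 2 then mpow uJ (k : ℕ) else 0) ?_
    intro s
    rcases h9J s with rfl | hv | ⟨a, ha1, ha2, rfl⟩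
    · refine ⟨⟨n - 1, by omega⟩, ?_⟩
      show (if n - 1 = 0 then vJ else if 1 ≤ n - 1 ∧ n - 1 ≤ n - 2 then mpow uJ (n - 1) else 0) = 0
      rw [if_neg (by omega), if_neg (by omega)]
    · refine ⟨⟨0, by omega⟩, ?_⟩
      show (if 0 = 0 then vJ else if 1 ≤ 0 ∧ 0 ≤ n - 2 then mpow uJ 0 else 0) = s
      rw [if_pos rfl]
      exact hv.symm
    · refine ⟨⟨a, by omega⟩, ?_⟩
      show (if a = 0 then vJ else if 1 ≤ a ∧ a ≤ n - 2 then mpow uJ a else 0) = mpow uJ a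
      rw [if_neg (by omega), if_pos ⟨ha1, ha2⟩]
  haveI : FiniteDimensional K A := Module.Finite.of_basis bA
  haveI : FiniteDimensional K B := Module.Finite.of_basis bB
  -- the bijection between nonzero elements
  obtain ⟨φX, hφXv, hφXu⟩ : ∃ φ : SX → SJ, φ vX = vJ ∧
      ∀ k, 1 ≤ k → k ≤ n - 2 → φ (mpow uX k) = mpow uJ k := by
    refine ⟨fun s => if s = vX then vJ else mpow uJ (st10_idx uX n s), if_pos rfl, ?_⟩
    intro k hk1 hk2
    show (if mpow uX k = vX then vJ else mpow uJ (st10_idx uX n (mpow uX k))) = mpow uJ k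
    rw [if_neg (fun hc => h8X k hk1 hk2 hc.symm), st10_idx_mpow uX n h7X hk1 hk2]
  obtain ⟨φJ, hφJv, hφJu⟩ : ∃ φ : SJ → SX, φ vJ = vX ∧
      ∀ k, 1 ≤ k → k ≤ n - 2 → φ (mpow uJ k) = mpow uX k := by
    refine ⟨fun s => if s = vJ then vX else mpow uX (st10_idx uJ n s), if_pos rfl, ?_⟩
    intro k hk1 hk2
    show (if mpow uJ k = vJ then vX else mpow uX (st10_idx uJ n (mpow uJ k))) = mpow uX k
    rw [if_neg (fun hc => h8J k hk1 hk2 hc.symm), st10_idx_mpow uJ n h7J hk1 hk2]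
  have hφXne : ∀ s : SX, s ≠ 0 → φX s ≠ 0 := by
    intro s hs
    rcases h9X s with rfl | rfl | ⟨a, ha1, ha2, rfl⟩
    · exact absurd rfl hs
    · rw [hφXv]; exact h5J
    · rw [hφXu a ha1 ha2]; exact h6J a ha1 ha2
  have hφJne : ∀ s : SJ, s ≠ 0 → φJ s ≠ 0 := by
    intro s hs
    rcases h9J s with rfl | rfl | ⟨a, ha1, ha2, rfl⟩
    · exact absurd rfl hs
    · rw [hφJv]; exact h5X
    · rw [hφJu a ha1 ha2]; exact h6X a ha1 ha2
  let eqv : {s : SX // s ≠ 0} ≃ {s : SJ // s ≠ 0} :=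
    { toFun := fun s => ⟨φX s.1, hφXne s.1 s.2⟩
      invFun := fun s => ⟨φJ s.1, hφJne s.1 s.2⟩
      left_inv := by
        intro s
        apply Subtype.ext
        show φJ (φX s.1) = s.1
        rcases h9X s.1 with h0 | hv | ⟨a, ha1, ha2, hae⟩
        · exact absurd h0 s.2
        · rw [hv, hφXv, hφJv]
        · rw [hae, hφXu a ha1 ha2, hφJu a ha1 ha2]
      right_inv := by
        intro s
        apply Subtype.ext
        show φX (φJ s.1) = s.1
        rcases h9J s.1 with h0 | hv | ⟨a, ha1, ha2, hae⟩
        · exact absurd h0 s.2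
        · rw [hv, hφJv, hφXv]
        · rw [hae, hφJu a ha1 ha2, hφXu a ha1 ha2] }
  have hfr : Module.finrank K A = Module.finrank K B :=
    LinearEquiv.finrank_eq
      (bA.repr.trans ((Finsupp.domLCongr eqv : _ ≃ₗ[K] _).trans bB.repr.symm))
  have hinj : Function.Injective e :=
    (LinearMap.injective_iff_surjective_of_finrank_eq_finrank hfr).mpr hsurj
  -- assemble
  refine ⟨{ toFun := e, map_smul' := fun c x => map_smul e c x,
            map_zero' := map_zero e, map_add' := fun x y => map_add e x y,
            map_mul' := hmul }, ⟨hinj, hsurj⟩, ?_, ?_⟩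
  · show e (f uX) = g uJ
    exact heU 1 le_rfl (by omega)
  · show e (f vX) = g (mpow uJ (n / 2 - 1)) - i • g vJ
    exact heV
end

section
/- Let K be a field and n ≥ 5. The algebras K H_{n-1} and K J_{n-1} are not isomorphic: both are commutative, but the two-sided annihilator of K H_{n-1} has dimension 2 (spanned by v and u^{n-2}) while the annihilator of K J_{n-1} has dimension 1 (spanned by u^{n-2}). -/
section SgAux
variable {S : Type*} [SemigroupWithZero S]

lemma mpow_succ' (x : S) {i : ℕ} (hi : 1 ≤ i) : mpow x (i + 1) = mpow x i * x := by
  obtain ⟨k, rfl⟩ := Nat.exists_eq_add_of_le' hi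
  rfl

lemma mpow_eq_zero_of_le (x : S) {m : ℕ} (hm : 1 ≤ m) (h : mpow x m = 0) :
    ∀ k, m ≤ k → mpow x k = 0 := by
  intro k hk
  induction k with
  | zero => omega
  | succ k ih =>
    rcases Nat.lt_or_ge m (k + 1) with h1 | h1
    · have hk1 : m ≤ k := by omega
      rw [mpow_succ' x (le_trans hm hk1), ih hk1, zero_mul]
    · have : m = k + 1 := by omega
      rw [← this]; exact h

lemma mpow_mul_mpow (x : S) : ∀ {i j : ℕ}, 1 ≤ i → 1 ≤ j →
    mpow x i * mpow x j = mpow x (i + j) := by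
  intro i j hi hj
  induction j with
  | zero => omega
  | succ j ih =>
    rcases Nat.lt_or_ge 1 (j + 1) with h1 | h1
    · have hj1 : 1 ≤ j := by omega
      rw [mpow_succ' x hj1, ← mul_assoc, ih hj1, ← mpow_succ' x (by omega : 1 ≤ i + j)]
      ring_nf
    · have : j = 0 := by omega
      subst this
      exact (mpow_succ' x hi).symm

variable {n c : ℕ} {u v : S}

lemma CC1.upow0 (h : IsCC1Sg n (n-1) (n-1) c S u v) (hn : 5 ≤ n) :
    ∀ k, n - 1 ≤ k → mpow u k = 0 :=
  mpow_eq_zero_of_le u (by omega) h.1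

lemma CC1.huv (h : IsCC1Sg n (n-1) (n-1) c S u v) : u * v = 0 := by
  rw [h.2.1, h.1]

lemma CC1.hvu (h : IsCC1Sg n (n-1) (n-1) c S u v) : v * u = 0 := by
  rw [h.2.2.1, h.1]

lemma CC1.upow_v (h : IsCC1Sg n (n-1) (n-1) c S u v) :
    ∀ i, 1 ≤ i → mpow u i * v = 0 := by
  intro i hi
  induction i with
  | zero => omega
  | succ i ih =>
    rcases Nat.lt_or_ge 1 (i + 1) with h1 | h1
    · have hi1 : 1 ≤ i := by omega
      rw [mpow_succ' u hi1, mul_assoc, CC1.huv h, mul_zero]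
    · have : i = 0 := by omega
      subst this
      exact CC1.huv h

lemma CC1.v_upow (h : IsCC1Sg n (n-1) (n-1) c S u v) :
    ∀ i, 1 ≤ i → v * mpow u i = 0 := by
  intro i hi
  induction i with
  | zero => omega
  | succ i ih =>
    rcases Nat.lt_or_ge 1 (i + 1) with h1 | h1
    · have hi1 : 1 ≤ i := by omega
      rw [mpow_succ' u hi1, ← mul_assoc, ih hi1, zero_mul]
    · have : i = 0 := by omega
      subst this
      exact CC1.hvu h

lemma CC1.comm (h : IsCC1Sg n (n-1) (n-1) c S u v) :
    ∀ s t : S, s * t = t * s := by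
  have hcl := h.2.2.2.2.2.2.2.2
  intro s t
  rcases hcl s with rfl | rfl | ⟨i, hi1, hi2, rfl⟩ <;>
    rcases hcl t with rfl | rfl | ⟨j, hj1, hj2, rfl⟩ <;>
      first
        | rfl
        | simp only [zero_mul, mul_zero]
        | skip
  · rw [CC1.v_upow h j hj1, CC1.upow_v h j hj1]
  · rw [CC1.v_upow h i hi1, CC1.upow_v h i hi1]
  · rw [mpow_mul_mpow u hi1 hj1, mpow_mul_mpow u hj1 hi1, Nat.add_comm]

lemma CC1.u_n2_left (h : IsCC1Sg n (n-1) (n-1) c S u v) (hn : 5 ≤ n) :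
    ∀ t : S, mpow u (n-2) * t = 0 := by
  intro t
  rcases h.2.2.2.2.2.2.2.2 t with rfl | rfl | ⟨j, hj1, hj2, rfl⟩
  · exact mul_zero _
  · exact CC1.upow_v h (n-2) (by omega)
  · rw [mpow_mul_mpow u (by omega : 1 ≤ n - 2) hj1]
    exact CC1.upow0 h hn _ (by omega)

end SgAux

section AlgAux
variable {K : Type*} [Field K] {S A : Type*} [SemigroupWithZero S]
  [NonUnitalRing A] [Module K A] [SMulCommClass K A A] [IsScalarTower K A A]
  {f : S → A}

noncomputable def cBasis (hf : IsContractedAlgebra K f) : Module.Basis {s : S // s ≠ 0} K A :=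
  Module.Basis.mk hf.2.2.1 hf.2.2.2.ge

omit [SMulCommClass K A A] [IsScalarTower K A A] in
lemma cBasis_apply (hf : IsContractedAlgebra K f) (s : {s : S // s ≠ 0}) :
    cBasis hf s = f s.1 := Module.Basis.mk_apply _ _ _

omit [SMulCommClass K A A] [IsScalarTower K A A] in
lemma lmap_eq_zero (hf : IsContractedAlgebra K f) {M : Type*} [AddCommGroup M] [Module K M]
    (L : A →ₗ[K] M) (h : ∀ s : S, s ≠ 0 → L (f s) = 0) : ∀ x, L x = 0 := by
  have hle : Submodule.span K (Set.range fun s : {s : S // s ≠ 0} => f s.1)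
      ≤ LinearMap.ker L := by
    rw [Submodule.span_le]
    rintro _ ⟨t, rfl⟩
    exact h t.1 t.2
  rw [hf.2.2.2] at hle
  exact fun x => hle (Submodule.mem_top)

lemma mul_comm_of_comm (hf : IsContractedAlgebra K f) (hcomm : ∀ s t : S, s * t = t * s) :
    ∀ x y : A, x * y = y * x := by
  have step1 : ∀ s : S, s ≠ 0 → ∀ x : A, f s * x = x * f s := by
    intro s hs
    have h0 := lmap_eq_zero hf (LinearMap.mulLeft K (f s) - LinearMap.mulRight K (f s)) ?_
    · intro x
      have := h0 x
      simp only [LinearMap.sub_apply, LinearMap.mulLeft_apply, LinearMap.mulRight_apply,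
        sub_eq_zero] at this
      exact this
    · intro t ht
      simp only [LinearMap.sub_apply, LinearMap.mulLeft_apply, LinearMap.mulRight_apply,
        ← hf.2.1, hcomm s t, sub_self]
  intro x y
  have h0 := lmap_eq_zero hf (LinearMap.mulRight K y - LinearMap.mulLeft K y) ?_
  · have := h0 x
    simp only [LinearMap.sub_apply, LinearMap.mulLeft_apply, LinearMap.mulRight_apply,
      sub_eq_zero] at this
    exact this
  · intro s hs
    simp only [LinearMap.sub_apply, LinearMap.mulLeft_apply, LinearMap.mulRight_apply,
      step1 s hs y, sub_self]

lemma mem_twoSidedAnn_iff {x : A} :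
    x ∈ twoSidedAnn K A ↔ (∀ b : A, x * b = 0) ∧ (∀ b : A, b * x = 0) := Iff.rfl

lemma mem_ann_of (hf : IsContractedAlgebra K f) {s0 : S}
    (h1 : ∀ t : S, s0 * t = 0) (h2 : ∀ t : S, t * s0 = 0) : f s0 ∈ twoSidedAnn K A := by
  rw [mem_twoSidedAnn_iff]
  constructor
  · exact lmap_eq_zero hf (LinearMap.mulLeft K (f s0))
      (fun t ht => by rw [LinearMap.mulLeft_apply, ← hf.2.1, h1 t, hf.1])
  · exact lmap_eq_zero hf (LinearMap.mulRight K (f s0))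
      (fun t ht => by rw [LinearMap.mulRight_apply, ← hf.2.1, h2 t, hf.1])

open scoped Classical in
lemma repr_mul (hf : IsContractedAlgebra K f) (w : S) (i i' : {s : S // s ≠ 0})
    (h : ∀ s : {s : S // s ≠ 0}, ((cBasis hf).repr (f s.1 * f w)) i'
        = if s = i then 1 else 0) (x : A) :
    (cBasis hf).repr (x * f w) i' = (cBasis hf).repr x i := by
  set b := cBasis hf
  have key : (Finsupp.lapply i').comp (b.repr.toLinearMap.comp (LinearMap.mulRight K (f w)))
      = (Finsupp.lapply i).comp b.repr.toLinearMap := by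
    refine Module.Basis.ext b ?_
    intro s
    simp only [LinearMap.comp_apply, LinearMap.mulRight_apply, LinearEquiv.coe_coe,
      Finsupp.lapply_apply, Module.Basis.repr_self]
    rw [show b s = f s.1 from cBasis_apply hf s]
    rw [h s, Finsupp.single_apply]
  simpa using LinearMap.congr_fun key x

end AlgAux
section MainAux
variable {K : Type*} [Field K] {n c : ℕ} {S A : Type*} [SemigroupWithZero S]
  [NonUnitalRing A] [Module K A] [SMulCommClass K A A] [IsScalarTower K A A]
  {u v : S} {f : S → A}

lemma coord_u (hn : 5 ≤ n) (hS : IsCC1Sg n (n-1) (n-1) c S u v)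
    (hf : IsContractedAlgebra K f)
    {x : A} (hx : x * f u = 0) {j : ℕ} (hj1 : 1 ≤ j) (hj2 : j ≤ n - 3) :
    (cBasis hf).repr x ⟨mpow u j, hS.2.2.2.2.2.1 j hj1 (by omega)⟩ = 0 := by
  classical
  have hinj := hS.2.2.2.2.2.2.1
  have hnz := hS.2.2.2.2.2.1
  set i : {s : S // s ≠ 0} := ⟨mpow u j, hnz j hj1 (by omega)⟩ with hidef
  set i' : {s : S // s ≠ 0} := ⟨mpow u (j+1), hnz (j+1) (by omega) (by omega)⟩ with hi'def
  have h := repr_mul hf u i i' ?_ x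
  · rw [hx, map_zero] at h
    simpa using h.symm
  · intro s
    rcases hS.2.2.2.2.2.2.2.2 s.1 with h0 | hv | ⟨k, hk1, hk2, hks⟩
    · exact absurd h0 s.2
    · have hne : s ≠ i := by
        intro he
        exact hS.2.2.2.2.2.2.2.1 j hj1 (by omega) (hv ▸ congrArg Subtype.val he)
      rw [← hf.2.1, hv, CC1.hvu hS, hf.1, map_zero, if_neg hne, Finsupp.zero_apply]
    · rw [← hf.2.1, hks, ← mpow_succ' u hk1]
      rcases Nat.lt_or_ge k (n-2) with hklt | hke
      · have hkn : mpow u (k+1) ≠ 0 := hnz (k+1) (by omega) (by omega)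
        rw [(cBasis_apply hf ⟨mpow u (k+1), hkn⟩).symm,
          Module.Basis.repr_self, Finsupp.single_apply]
        by_cases hkj : k = j
        · subst hkj
          rw [if_pos (Subtype.ext rfl : (⟨mpow u (k+1), hkn⟩ : {s : S // s ≠ 0}) = i'),
            if_pos (Subtype.ext hks : s = i)]
        · rw [if_neg, if_neg]
          · intro he
            exact hkj (hinj k j hk1 hk2 hj1 (by omega) (hks ▸ congrArg Subtype.val he))
          · intro he
            have := congrArg Subtype.val he
            exact hkj (by
              have h2 := hinj (k+1) (j+1) (by omega) (by omega) (by omega) (by omega) this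
              omega)
      · have hk2' : k = n - 2 := by omega
        subst hk2'
        rw [CC1.upow0 hS hn (n-2+1) (by omega), hf.1, map_zero, Finsupp.zero_apply, if_neg]
        intro he
        have := hks ▸ congrArg Subtype.val he
        have := hinj (n-2) j (by omega) le_rfl hj1 (by omega) this
        omega

lemma coord_v (hn : 5 ≤ n) (hS : IsCC1Sg n (n-1) (n-1) (n-2) S u v)
    (hf : IsContractedAlgebra K f)
    {x : A} (hx : x * f v = 0) :
    (cBasis hf).repr x ⟨v, hS.2.2.2.2.1⟩ = 0 := by
  classical
  have hnz := hS.2.2.2.2.2.1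
  set iv : {s : S // s ≠ 0} := ⟨v, hS.2.2.2.2.1⟩ with hivdef
  set i2 : {s : S // s ≠ 0} := ⟨mpow u (n-2), hnz (n-2) (by omega) le_rfl⟩ with hi2def
  have h := repr_mul hf v iv i2 ?_ x
  · rw [hx, map_zero] at h
    simpa using h.symm
  · intro s
    rcases hS.2.2.2.2.2.2.2.2 s.1 with h0 | hv | ⟨k, hk1, hk2, hks⟩
    · exact absurd h0 s.2
    · rw [← hf.2.1, hv, hS.2.2.2.1,
        (cBasis_apply hf i2).symm,
        Module.Basis.repr_self, if_pos (Subtype.ext hv : s = iv), Finsupp.single_eq_same]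
    · have hne : s ≠ iv := by
        intro he
        exact hS.2.2.2.2.2.2.2.1 k hk1 hk2 ((hks ▸ congrArg Subtype.val he).symm)
      rw [← hf.2.1, hks, CC1.upow_v hS k hk1, hf.1, map_zero, if_neg hne, Finsupp.zero_apply]

end MainAux
section MainAux2
variable {K : Type*} [Field K] {n c : ℕ} {S A : Type*} [SemigroupWithZero S]
  [NonUnitalRing A] [Module K A] [SMulCommClass K A A] [IsScalarTower K A A]
  {u v : S} {f : S → A}

lemma annH_span (hn : 5 ≤ n) (hS : IsCC1Sg n (n-1) (n-1) (2*n-4) S u v)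
    (hf : IsContractedAlgebra K f) :
    twoSidedAnn K A = Submodule.span K {f v, f (mpow u (n-2))} := by
  classical
  have hnz := hS.2.2.2.2.2.1
  set iv : {s : S // s ≠ 0} := ⟨v, hS.2.2.2.2.1⟩ with hivdef
  set i2 : {s : S // s ≠ 0} := ⟨mpow u (n-2), hnz (n-2) (by omega) le_rfl⟩ with hi2def
  have himg : ({f v, f (mpow u (n-2))} : Set A) = cBasis hf '' {iv, i2} := by
    rw [Set.image_pair, cBasis_apply, cBasis_apply]
  have hvv0 : v * v = 0 := by
    rw [hS.2.2.2.1]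
    exact CC1.upow0 hS hn (2*n-4) (by omega)
  apply le_antisymm
  · intro x hx
    rw [himg, Module.Basis.mem_span_image]
    intro ii hii
    have hrep : (cBasis hf).repr x ii ≠ 0 := Finsupp.mem_support_iff.mp hii
    rcases hS.2.2.2.2.2.2.2.2 ii.1 with h0 | hv | ⟨k, hk1, hk2, hk⟩
    · exact absurd h0 ii.2
    · exact Set.mem_insert_iff.mpr (Or.inl (Subtype.ext hv))
    · by_cases hk2' : k = n - 2
      · subst hk2'
        exact Set.mem_insert_iff.mpr (Or.inr (by
          exact Set.mem_singleton_iff.mpr (Subtype.ext hk)))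
      · exfalso
        apply hrep
        have := coord_u hn hS hf ((mem_twoSidedAnn_iff.mp hx).1 (f u)) hk1
          (by omega : k ≤ n - 3)
        rw [show ii = ⟨mpow u k, hnz k hk1 hk2⟩ from Subtype.ext hk]
        exact this
  · rw [Submodule.span_le]
    rintro y hy
    rcases hy with rfl | rfl
    · refine mem_ann_of hf ?_ ?_ <;> intro t <;>
        rcases hS.2.2.2.2.2.2.2.2 t with rfl | rfl | ⟨k, hk1, hk2, rfl⟩
      · exact mul_zero _
      · exact hvv0
      · exact CC1.v_upow hS k hk1
      · exact zero_mul _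
      · exact hvv0
      · exact CC1.upow_v hS k hk1
    · refine mem_ann_of hf (CC1.u_n2_left hS hn) ?_
      intro t
      rw [CC1.comm hS t (mpow u (n-2))]
      exact CC1.u_n2_left hS hn t

lemma annJ_span (hn : 5 ≤ n) (hS : IsCC1Sg n (n-1) (n-1) (n-2) S u v)
    (hf : IsContractedAlgebra K f) :
    twoSidedAnn K A = Submodule.span K {f (mpow u (n-2))} := by
  classical
  have hnz := hS.2.2.2.2.2.1
  set i2 : {s : S // s ≠ 0} := ⟨mpow u (n-2), hnz (n-2) (by omega) le_rfl⟩ with hi2def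
  have himg : ({f (mpow u (n-2))} : Set A) = cBasis hf '' {i2} := by
    rw [Set.image_singleton, cBasis_apply]
  apply le_antisymm
  · intro x hx
    rw [himg, Module.Basis.mem_span_image]
    intro ii hii
    have hrep : (cBasis hf).repr x ii ≠ 0 := Finsupp.mem_support_iff.mp hii
    rcases hS.2.2.2.2.2.2.2.2 ii.1 with h0 | hv | ⟨k, hk1, hk2, hk⟩
    · exact absurd h0 ii.2
    · exfalso
      apply hrep
      have := coord_v hn hS hf ((mem_twoSidedAnn_iff.mp hx).1 (f v))
      rw [show ii = ⟨v, hS.2.2.2.2.1⟩ from Subtype.ext hv]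
      exact this
    · by_cases hk2' : k = n - 2
      · subst hk2'
        exact Set.mem_singleton_iff.mpr (Subtype.ext hk)
      · exfalso
        apply hrep
        have := coord_u hn hS hf ((mem_twoSidedAnn_iff.mp hx).1 (f u)) hk1
          (by omega : k ≤ n - 3)
        rw [show ii = ⟨mpow u k, hnz k hk1 hk2⟩ from Subtype.ext hk]
        exact this
  · rw [Submodule.span_le]
    rintro y hy
    rw [Set.mem_singleton_iff] at hy
    subst hy
    refine mem_ann_of hf (CC1.u_n2_left hS hn) ?_
    intro t
    rw [CC1.comm hS t (mpow u (n-2))]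
    exact CC1.u_n2_left hS hn t

lemma finrank_pairH (hn : 5 ≤ n) (hS : IsCC1Sg n (n-1) (n-1) (2*n-4) S u v)
    (hf : IsContractedAlgebra K f) :
    Module.finrank K (Submodule.span K {f v, f (mpow u (n-2))}) = 2 := by
  classical
  have hnz := hS.2.2.2.2.2.1
  set iv : {s : S // s ≠ 0} := ⟨v, hS.2.2.2.2.1⟩ with hivdef
  set i2 : {s : S // s ≠ 0} := ⟨mpow u (n-2), hnz (n-2) (by omega) le_rfl⟩ with hi2def
  have hne : iv ≠ i2 := by
    intro he
    exact hS.2.2.2.2.2.2.2.1 (n-2) (by omega) le_rfl (congrArg Subtype.val he)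
  have hli : LinearIndependent K ![f v, f (mpow u (n-2))] := by
    rw [LinearIndependent.pair_iff]
    intro s t hst
    have h := congrArg (cBasis hf).repr hst
    rw [map_add, map_smul, map_smul, map_zero,
      show f v = cBasis hf iv from (cBasis_apply hf iv).symm,
      show f (mpow u (n-2)) = cBasis hf i2 from (cBasis_apply hf i2).symm,
      Module.Basis.repr_self, Module.Basis.repr_self] at h
    constructor
    · have := DFunLike.congr_fun h iv
      simpa [Finsupp.single_apply, hne, Ne.symm hne] using this
    · have := DFunLike.congr_fun h i2
      simpa [Finsupp.single_apply, hne, Ne.symm hne] using this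
  have hr : Set.range ![f v, f (mpow u (n-2))] = {f v, f (mpow u (n-2))} := by
    ext z
    simp [Fin.exists_fin_two]
    tauto
  rw [← hr, finrank_span_eq_card hli]
  simp

lemma finrank_singJ (hn : 5 ≤ n) (hS : IsCC1Sg n (n-1) (n-1) (n-2) S u v)
    (hf : IsContractedAlgebra K f) :
    Module.finrank K (Submodule.span K {f (mpow u (n-2))}) = 1 := by
  have hnz := hS.2.2.2.2.2.1
  have h0 : f (mpow u (n-2)) ≠ 0 := by
    rw [← cBasis_apply hf ⟨mpow u (n-2), hnz (n-2) (by omega) le_rfl⟩]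
    exact (cBasis hf).ne_zero _
  exact finrank_span_singleton h0

end MainAux2
/-- For a field `K` and `n ≥ 5`, the contracted semigroup algebras `K H_(n-1)` and
`K J_(n-1)` are not isomorphic: both are commutative, but the two-sided annihilator of
`K H_(n-1)` has dimension `2` (spanned by `v` and `u^(n-2)`) while that of `K J_(n-1)`
has dimension `1` (spanned by `u^(n-2)`). -/
theorem statement12 {K : Type*} [Field K] (n : ℕ) (hn : 5 ≤ n)
    {SH : Type*} [SemigroupWithZero SH] (uH vH : SH)
    (hH : IsCC1Sg n (n - 1) (n - 1) (2 * n - 4) SH uH vH)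
    {SJ : Type*} [SemigroupWithZero SJ] (uJ vJ : SJ)
    (hJ : IsCC1Sg n (n - 1) (n - 1) (n - 2) SJ uJ vJ)
    {A : Type*} [NonUnitalRing A] [Module K A] [SMulCommClass K A A] [IsScalarTower K A A]
    {B : Type*} [NonUnitalRing B] [Module K B] [SMulCommClass K B B] [IsScalarTower K B B]
    (f : SH → A) (hf : IsContractedAlgebra K f)
    (g : SJ → B) (hg : IsContractedAlgebra K g) :
    (∀ a b : A, a * b = b * a) ∧ (∀ a b : B, a * b = b * a) ∧
    twoSidedAnn K A = Submodule.span K {f vH, f (mpow uH (n - 2))} ∧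
    Module.finrank K (twoSidedAnn K A) = 2 ∧
    twoSidedAnn K B = Submodule.span K {g (mpow uJ (n - 2))} ∧
    Module.finrank K (twoSidedAnn K B) = 1 ∧
    ¬ ∃ e : A →ₙₐ[K] B, Function.Bijective e := by
  have hA : twoSidedAnn K A = Submodule.span K {f vH, f (mpow uH (n-2))} :=
    annH_span hn hH hf
  have hB : twoSidedAnn K B = Submodule.span K {g (mpow uJ (n-2))} :=
    annJ_span hn hJ hg
  have hA2 : Module.finrank K (twoSidedAnn K A) = 2 := by
    rw [hA]; exact finrank_pairH hn hH hf
  have hB1 : Module.finrank K (twoSidedAnn K B) = 1 := by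
    rw [hB]; exact finrank_singJ hn hJ hg
  refine ⟨mul_comm_of_comm hf (CC1.comm hH), mul_comm_of_comm hg (CC1.comm hJ),
    hA, hA2, hB, hB1, ?_⟩
  rintro ⟨e, he⟩
  have hsm : ∀ (r : K) (x : A), e (r • x) = (RingHom.id K) r • e x := fun r x => by
    simp [map_smul]
  set el : A →ₗ[K] B := ⟨⟨e, map_add e⟩, hsm⟩ with heldef
  have hmap : (twoSidedAnn K A).map el = twoSidedAnn K B := by
    apply le_antisymm
    · intro x hx
      obtain ⟨a, ha, rfl⟩ := Submodule.mem_map.mp hx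
      have ha' := mem_twoSidedAnn_iff.mp ha
      rw [mem_twoSidedAnn_iff]
      constructor
      · intro bb
        obtain ⟨a', rfl⟩ := he.2 bb
        show e a * e a' = 0
        rw [← map_mul e, ha'.1 a', map_zero]
      · intro bb
        obtain ⟨a', rfl⟩ := he.2 bb
        show e a' * e a = 0
        rw [← map_mul e, ha'.2 a', map_zero]
    · intro bb hbb
      have hbb' := mem_twoSidedAnn_iff.mp hbb
      obtain ⟨a, rfl⟩ := he.2 bb
      refine Submodule.mem_map.mpr ⟨a, ?_, rfl⟩
      rw [mem_twoSidedAnn_iff]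
      constructor
      · intro cc
        apply he.1
        rw [map_mul, map_zero]
        exact hbb'.1 (e cc)
      · intro cc
        apply he.1
        rw [map_mul, map_zero]
        exact hbb'.2 (e cc)
  have hfr := LinearEquiv.finrank_eq
    (Submodule.equivMapOfInjective el he.1 (twoSidedAnn K A))
  rw [hmap, hA2, hB1] at hfr
  exact absurd hfr (by norm_num)
end
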